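/- Let 𝒟 be the subgroup of the direct product ∏_{n∈ℕ} D_{2n+3} of dihedral groups consisting of all sequences whose coordinates are rotations for all but finitely many n. Then 𝒟 satisfies condition (2): for all g, h ∈ 𝒟 there exists a positive integer n with g·hⁿ = hⁿ·g. -/

import Mathlib

/-- The subgroup `𝒟` of `∏ n, D_{2n+3}` of sequences whose coordinates are rotations
for all but finitely many `n`. -/
def scriptD : Subgroup (∀ n : ℕ, DihedralGroup (2 * n + 3)) where
  carrier := {f | {n : ℕ | ¬ ∃ i, f n = DihedralGroup.r i}.Finite}
  one_mem' := by
    apply Set.finite_empty.subset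
    intro n hn
    exact hn ⟨0, DihedralGroup.one_def⟩
  mul_mem' := by
    intro f g hf hg
    apply (Set.Finite.union hf hg).subset
    intro n hn
    simp only [Set.mem_union, Set.mem_setOf_eq] at *
    by_contra hc
    rw [not_or, not_not, not_not] at hc
    obtain ⟨⟨i, hi⟩, ⟨j, hj⟩⟩ := hc
    exact hn ⟨i + j, by rw [Pi.mul_apply, hi, hj, DihedralGroup.r_mul_r]⟩
  inv_mem' := by
    intro f hf
    apply hf.subset
    intro n hn
    simp only [Set.mem_setOf_eq] at *
    by_contra hc
    obtain ⟨i, hi⟩ := hc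
    refine hn ⟨-i, ?_⟩
    rw [Pi.inv_apply, hi]
    rw [inv_eq_iff_mul_eq_one, DihedralGroup.r_mul_r, add_neg_cancel, DihedralGroup.one_def]



private lemma r_pow_aux {m : ℕ} (i : ZMod m) (N : ℕ) :
    (DihedralGroup.r i) ^ N = DihedralGroup.r ((N : ZMod m) * i) := by
  induction N with
  | zero => simp
  | succ k ih =>
    rw [pow_succ, ih, DihedralGroup.r_mul_r]
    congr 1
    push_cast
    ring

private lemma sr_pow_even {m : ℕ} (j : ZMod m) (N : ℕ) (hN : Even N) :
    (DihedralGroup.sr j) ^ N = 1 := by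
  obtain ⟨k, rfl⟩ := hN
  rw [← two_mul, pow_mul, sq, DihedralGroup.sr_mul_self, one_pow]

theorem scriptD_cond2 :
    ∀ g h : scriptD, ∃ n : ℕ, 0 < n ∧ g * h ^ n = h ^ n * g := by

  intro g h
  have hg : {n : ℕ | ¬ ∃ i, (g : ∀ n : ℕ, DihedralGroup (2 * n + 3)) n = DihedralGroup.r i}.Finite := g.2
  set N : ℕ := 2 * ∏ k ∈ hg.toFinset, (2 * k + 3) with hNdef
  refine ⟨N, by positivity, ?_⟩
  ext k
  simp only [Subgroup.coe_mul, SubmonoidClass.coe_pow, Pi.mul_apply, Pi.pow_apply]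
  rcases hh : (h : ∀ n : ℕ, DihedralGroup (2 * n + 3)) k with i | j
  · rw [r_pow_aux]
    rcases hgk : (g : ∀ n : ℕ, DihedralGroup (2 * n + 3)) k with a | a
    · rw [DihedralGroup.r_mul_r, DihedralGroup.r_mul_r, add_comm a]
    · have hk : k ∈ hg.toFinset := by
        simp only [Set.Finite.mem_toFinset, Set.mem_setOf_eq]
        rintro ⟨b, hb⟩
        rw [hgk] at hb
        exact absurd hb (by simp)
      have hdvd : (2 * k + 3) ∣ N := Dvd.dvd.mul_left (Finset.dvd_prod_of_mem _ hk) 2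
      have hz : ((N : ZMod (2 * k + 3))) = 0 :=
        (ZMod.natCast_eq_zero_iff _ _).mpr hdvd
      rw [hz, zero_mul, ← DihedralGroup.one_def, mul_one, one_mul]
  · rw [sr_pow_even _ _ ⟨∏ k ∈ hg.toFinset, (2 * k + 3), by rw [hNdef]; ring⟩, mul_one, one_mul]
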